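/- Let X and Y be real normed spaces with X of dimension at least 2, and let T : X → Y be a nonzero linear mapping such that for all x,y ∈ X, x ⊥_I y implies Tx ⊥_{ρ*} Ty. Then (1/3)·‖T‖·‖x‖ ≤ ‖Tx‖ ≤ 3·[T]·‖x‖ for all x ∈ X, where ‖T‖ is the operator norm of T and [T] := inf{‖Tx‖ : x ∈ X, ‖x‖ = 1}. -/

import Mathlib

open Filter Topology

/-- The norm derivative `ρ₊(x,y) = lim_{t→0⁺} (‖x+ty‖² − ‖x‖²)/(2t)`. -/
noncomputable def rhoPlus {X : Type*} [NormedAddCommGroup X] [NormedSpace ℝ X] (x y : X) : ℝ :=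
  limUnder (𝓝[>] (0 : ℝ)) (fun t : ℝ => (‖x + t • y‖ ^ 2 - ‖x‖ ^ 2) / (2 * t))

/-- The norm derivative `ρ₋(x,y) = lim_{t→0⁻} (‖x+ty‖² − ‖x‖²)/(2t)`. -/
noncomputable def rhoMinus {X : Type*} [NormedAddCommGroup X] [NormedSpace ℝ X] (x y : X) : ℝ :=
  limUnder (𝓝[<] (0 : ℝ)) (fun t : ℝ => (‖x + t • y‖ ^ 2 - ‖x‖ ^ 2) / (2 * t))

/-- `ρ*(x,y) := ρ₋(x,y)·ρ₊(x,y)`. -/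
noncomputable def rhoStar {X : Type*} [NormedAddCommGroup X] [NormedSpace ℝ X] (x y : X) : ℝ :=
  rhoMinus x y * rhoPlus x y
/-- The operator norm of a linear map: the supremum of `‖T x‖` over the unit sphere. -/
noncomputable def opNorm {X Y : Type*} [NormedAddCommGroup X] [NormedSpace ℝ X]
    [NormedAddCommGroup Y] [NormedSpace ℝ Y] (T : X →ₗ[ℝ] Y) : ℝ :=
  sSup {c : ℝ | ∃ x : X, ‖x‖ = 1 ∧ c = ‖T x‖}

/-- `[T] := inf {‖T x‖ : ‖x‖ = 1}`. -/
noncomputable def infNorm {X Y : Type*} [NormedAddCommGroup X] [NormedSpace ℝ X]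
    [NormedAddCommGroup Y] [NormedSpace ℝ Y] (T : X →ₗ[ℝ] Y) : ℝ :=
  sInf {c : ℝ | ∃ x : X, ‖x‖ = 1 ∧ c = ‖T x‖}



section AuxRho
open Set
variable {Y : Type*} [NormedAddCommGroup Y] [NormedSpace ℝ Y]

lemma norm_affine_convex (x y : Y) : ConvexOn ℝ Set.univ (fun t : ℝ => ‖x + t • y‖) := by
  refine ⟨convex_univ, fun t₁ _ t₂ _ a b ha hb hab => ?_⟩
  have key : a • (x + t₁ • y) + b • (x + t₂ • y) = (a + b) • x + (a * t₁ + b * t₂) • y := by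
    module
  rw [hab, one_smul] at key
  simp only [smul_eq_mul]
  calc ‖x + (a * t₁ + b * t₂) • y‖ = ‖a • (x + t₁ • y) + b • (x + t₂ • y)‖ := by rw [key]
    _ ≤ ‖a • (x + t₁ • y)‖ + ‖b • (x + t₂ • y)‖ := norm_add_le _ _
    _ = a * ‖x + t₁ • y‖ + b * ‖x + t₂ • y‖ := by
        rw [norm_smul, norm_smul, Real.norm_of_nonneg ha, Real.norm_of_nonneg hb]

lemma slope_abs_le (x y : Y) {t : ℝ} (ht : t ≠ 0) :
    |(‖x + t • y‖ - ‖x‖) / t| ≤ ‖y‖ := by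
  have h := abs_norm_sub_norm_le (x + t • y) x
  rw [add_sub_cancel_left, norm_smul, Real.norm_eq_abs] at h
  rw [abs_div]
  rw [div_le_iff₀ (abs_pos.mpr ht)]
  linarith [h]

lemma rhoPlus_tendsto (x y : Y) :
    Tendsto (fun t : ℝ => (‖x + t • y‖ ^ 2 - ‖x‖ ^ 2) / (2 * t)) (𝓝[>] (0:ℝ))
      (𝓝 (rhoPlus x y)) := by
  set f : ℝ → ℝ := fun t => ‖x + t • y‖ with hf
  have hmono : MonotoneOn (slope f 0) (Ioi (0:ℝ)) :=
    ((norm_affine_convex x y).slope_mono (mem_univ 0)).mono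
      (fun t ht => ⟨mem_univ t, ne_of_gt ht⟩)
  have hbdd : BddBelow (slope f 0 '' Ioi (0:ℝ)) := by
    refine ⟨-‖y‖, fun c ⟨t, ht, hc⟩ => ?_⟩
    have := slope_abs_le x y (ne_of_gt ht)
    rw [← hc]
    simp only [slope_def_field, sub_zero, f]
    have h0 : ‖x + (0:ℝ) • y‖ = ‖x‖ := by simp
    rw [h0]
    linarith [abs_le.mp this]
  have hg : Tendsto (slope f 0) (𝓝[>] (0:ℝ)) (𝓝 (sInf (slope f 0 '' Ioi 0))) :=
    hmono.tendsto_nhdsGT hbdd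
  have hcont : Tendsto (fun t : ℝ => (f t + ‖x‖) / 2) (𝓝[>] (0:ℝ)) (𝓝 ‖x‖) := by
    have hc : Continuous fun t : ℝ => (‖x + t • y‖ + ‖x‖) / 2 := by fun_prop
    have := (hc.tendsto 0).mono_left (nhdsWithin_le_nhds (s := Ioi (0:ℝ)))
    simpa using this
  have hq : Tendsto (fun t : ℝ => (‖x + t • y‖ ^ 2 - ‖x‖ ^ 2) / (2 * t)) (𝓝[>] (0:ℝ))
      (𝓝 (sInf (slope f 0 '' Ioi 0) * ‖x‖)) := by
    refine (hg.mul hcont).congr' ?_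
    filter_upwards [self_mem_nhdsWithin] with t ht
    have htne : t ≠ 0 := ne_of_gt ht
    simp only [slope_def_field, sub_zero, f]
    have h0 : ‖x + (0:ℝ) • y‖ = ‖x‖ := by simp
    rw [h0]
    field_simp
    ring
  rw [rhoPlus, hq.limUnder_eq]
  exact hq

lemma rhoMinus_tendsto (x y : Y) :
    Tendsto (fun t : ℝ => (‖x + t • y‖ ^ 2 - ‖x‖ ^ 2) / (2 * t)) (𝓝[<] (0:ℝ))
      (𝓝 (rhoMinus x y)) := by
  set f : ℝ → ℝ := fun t => ‖x + t • y‖ with hf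
  have hmono : MonotoneOn (slope f 0) (Iio (0:ℝ)) :=
    ((norm_affine_convex x y).slope_mono (mem_univ 0)).mono
      (fun t ht => ⟨mem_univ t, ne_of_lt ht⟩)
  have hbdd : BddAbove (slope f 0 '' Iio (0:ℝ)) := by
    refine ⟨‖y‖, fun c ⟨t, ht, hc⟩ => ?_⟩
    have := slope_abs_le x y (ne_of_lt ht)
    rw [← hc]
    simp only [slope_def_field, sub_zero, f]
    have h0 : ‖x + (0:ℝ) • y‖ = ‖x‖ := by simp
    rw [h0]
    linarith [abs_le.mp this]
  have hg : Tendsto (slope f 0) (𝓝[<] (0:ℝ)) (𝓝 (sSup (slope f 0 '' Iio 0))) :=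
    hmono.tendsto_nhdsLT hbdd
  have hcont : Tendsto (fun t : ℝ => (f t + ‖x‖) / 2) (𝓝[<] (0:ℝ)) (𝓝 ‖x‖) := by
    have hc : Continuous fun t : ℝ => (‖x + t • y‖ + ‖x‖) / 2 := by fun_prop
    have := (hc.tendsto 0).mono_left (nhdsWithin_le_nhds (s := Iio (0:ℝ)))
    simpa using this
  have hq : Tendsto (fun t : ℝ => (‖x + t • y‖ ^ 2 - ‖x‖ ^ 2) / (2 * t)) (𝓝[<] (0:ℝ))
      (𝓝 (sSup (slope f 0 '' Iio 0) * ‖x‖)) := by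
    refine (hg.mul hcont).congr' ?_
    filter_upwards [self_mem_nhdsWithin] with t ht
    have htne : t ≠ 0 := ne_of_lt ht
    simp only [slope_def_field, sub_zero, f]
    have h0 : ‖x + (0:ℝ) • y‖ = ‖x‖ := by simp
    rw [h0]
    field_simp
    ring
  rw [rhoMinus, hq.limUnder_eq]
  exact hq

lemma key_norm_ineq (a b : Y) (h : rhoStar (a + b) (a - b) = 0) : ‖a + b‖ ≤ 2 * ‖b‖ := by
  set u : Y := a + b with hu
  set z : Y := a - b with hz
  set A : ℝ := ‖u‖ with hA
  set B : ℝ := ‖b‖ with hB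
  have hB0 : 0 ≤ B := norm_nonneg _
  rcases eq_or_lt_of_le (norm_nonneg u) with h0 | hApos
  · rw [hA, ← h0]; positivity
  have hident : ∀ t : ℝ, u + t • z = (1 + t) • u - (2 * t) • b := by
    intro t; rw [hu, hz]; module
  -- lower bound for rhoPlus
  have hplus : A * (A - 2 * B) ≤ rhoPlus u z := by
    set t₀ : ℝ := A / (A + 2 * B + 1) with ht₀
    have ht₀pos : 0 < t₀ := by positivity
    have hev : ∀ᶠ t in 𝓝[>] (0:ℝ),
        A * (A - 2 * B) + t / 2 * (A - 2 * B) ^ 2 ≤ (‖u + t • z‖ ^ 2 - ‖u‖ ^ 2) / (2 * t) := by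
      filter_upwards [Ioo_mem_nhdsGT_of_mem (Set.left_mem_Ico.mpr ht₀pos)] with t ht
      obtain ⟨ht1, ht2⟩ := ht
      have htne : t ≠ 0 := ne_of_gt ht1
      have htlt : t * (A + 2 * B + 1) < A := by
        rw [ht₀, lt_div_iff₀ (by positivity)] at ht2; linarith
      have hm0 : 0 ≤ (1 + t) * A - 2 * t * B := by nlinarith
      have hm : (1 + t) * A - 2 * t * B ≤ ‖u + t • z‖ := by
        have hn := norm_sub_norm_le ((1 + t) • u) ((2 * t) • b)
        rw [← hident t, norm_smul, norm_smul, Real.norm_of_nonneg (by linarith : (0:ℝ) ≤ 1 + t),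
          Real.norm_of_nonneg (by linarith : (0:ℝ) ≤ 2 * t)] at hn
        linarith
      have hsq : ((1 + t) * A - 2 * t * B) ^ 2 ≤ ‖u + t • z‖ ^ 2 := by
        exact pow_le_pow_left₀ hm0 hm 2
      have hdiv : (((1 + t) * A - 2 * t * B) ^ 2 - A ^ 2) / (2 * t)
          ≤ (‖u + t • z‖ ^ 2 - ‖u‖ ^ 2) / (2 * t) := by
        rw [← hA]; gcongr; all_goals linarith
      have heq : (((1 + t) * A - 2 * t * B) ^ 2 - A ^ 2) / (2 * t)
          = A * (A - 2 * B) + t / 2 * (A - 2 * B) ^ 2 := by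
        rw [div_eq_iff (mul_ne_zero two_ne_zero htne)]; ring
      rw [heq] at hdiv; linarith
    have htend : Tendsto (fun t : ℝ => A * (A - 2 * B) + t / 2 * (A - 2 * B) ^ 2)
        (𝓝[>] (0:ℝ)) (𝓝 (A * (A - 2 * B))) := by
      have hc : Continuous fun t : ℝ => A * (A - 2 * B) + t / 2 * (A - 2 * B) ^ 2 := by fun_prop
      have := (hc.tendsto 0).mono_left (nhdsWithin_le_nhds (s := Set.Ioi (0:ℝ)))
      simpa using this
    exact le_of_tendsto_of_tendsto htend (rhoPlus_tendsto u z) hev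
  -- lower bound for rhoMinus
  have hminus : A * (A - 2 * B) ≤ rhoMinus u z := by
    have hev : ∀ᶠ t in 𝓝[<] (0:ℝ),
        A * (A - 2 * B) + t / 2 * (A - 2 * B) ^ 2 ≤ (‖u + t • z‖ ^ 2 - ‖u‖ ^ 2) / (2 * t) := by
      filter_upwards [Ioo_mem_nhdsLT_of_mem (Set.right_mem_Ioc.mpr (by norm_num : (-1:ℝ) < 0))]
        with t ht
      obtain ⟨ht1, ht2⟩ := ht
      have hm : ‖u + t • z‖ ≤ (1 + t) * A - 2 * t * B := by
        have hn := norm_sub_le ((1 + t) • u) ((2 * t) • b)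
        rw [← hident t, norm_smul, norm_smul, Real.norm_of_nonneg (by linarith : (0:ℝ) ≤ 1 + t),
          Real.norm_of_nonpos (by linarith : 2 * t ≤ (0:ℝ))] at hn
        linarith
      have hsq : ‖u + t • z‖ ^ 2 ≤ ((1 + t) * A - 2 * t * B) ^ 2 :=
        pow_le_pow_left₀ (norm_nonneg _) hm 2
      have h2t : 2 * t < 0 := by linarith
      have hdiv : (((1 + t) * A - 2 * t * B) ^ 2 - A ^ 2) / (2 * t)
          ≤ (‖u + t • z‖ ^ 2 - ‖u‖ ^ 2) / (2 * t) := by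
        rw [← hA, div_le_div_right_of_neg h2t]
        linarith
      have heq : (((1 + t) * A - 2 * t * B) ^ 2 - A ^ 2) / (2 * t)
          = A * (A - 2 * B) + t / 2 * (A - 2 * B) ^ 2 := by
        have htne : t ≠ 0 := ne_of_lt ht2
        rw [div_eq_iff (mul_ne_zero two_ne_zero htne)]; ring
      rw [heq] at hdiv; linarith
    have htend : Tendsto (fun t : ℝ => A * (A - 2 * B) + t / 2 * (A - 2 * B) ^ 2)
        (𝓝[<] (0:ℝ)) (𝓝 (A * (A - 2 * B))) := by
      have hc : Continuous fun t : ℝ => A * (A - 2 * B) + t / 2 * (A - 2 * B) ^ 2 := by fun_prop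
      have := (hc.tendsto 0).mono_left (nhdsWithin_le_nhds (s := Set.Iio (0:ℝ)))
      simpa using this
    exact le_of_tendsto_of_tendsto htend (rhoMinus_tendsto u z) hev
  have h' : rhoMinus u z * rhoPlus u z = 0 := h
  have hle : A * (A - 2 * B) ≤ 0 := by
    rcases mul_eq_zero.mp h' with h'' | h''
    · rw [h''] at hminus; linarith
    · rw [h''] at hplus; linarith
  nlinarith

end AuxRho

theorem isosceles_to_rhoStar_bounds {X Y : Type*} [NormedAddCommGroup X] [NormedSpace ℝ X]
    [NormedAddCommGroup Y] [NormedSpace ℝ Y] (hdim : 2 ≤ Module.rank ℝ X)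
    (T : X →ₗ[ℝ] Y) (hT : T ≠ 0)
    (hpres : ∀ x y : X, ‖x + y‖ = ‖x - y‖ → rhoStar (T x) (T y) = 0) :
    ∀ x : X, (1 / 3) * opNorm T * ‖x‖ ≤ ‖T x‖ ∧ ‖T x‖ ≤ 3 * infNorm T * ‖x‖ := by
  have key : ∀ x y : X, ‖x‖ = 1 → ‖y‖ = 1 → ‖T x‖ ≤ 3 * ‖T y‖ := by
    intro x y hx hy
    have horth : ‖(x + y) + (x - y)‖ = ‖(x + y) - (x - y)‖ := by
      have e1 : (x + y) + (x - y) = (2:ℝ) • x := by module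
      have e2 : (x + y) - (x - y) = (2:ℝ) • y := by module
      rw [e1, e2, norm_smul, norm_smul, hx, hy]
    have h2 := hpres _ _ horth
    rw [map_add, map_sub] at h2
    have h3 : ‖T x + T y‖ ≤ 2 * ‖T y‖ := key_norm_ineq (T x) (T y) h2
    calc ‖T x‖ = ‖(T x + T y) - T y‖ := by rw [add_sub_cancel_right]
      _ ≤ ‖T x + T y‖ + ‖T y‖ := norm_sub_le _ _
      _ ≤ 3 * ‖T y‖ := by linarith
  obtain ⟨x₀, hx₀⟩ : ∃ x : X, T x ≠ 0 := by
    by_contra hc; push_neg at hc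
    exact hT (LinearMap.ext fun x => by simp [hc x])
  have hx₀0 : x₀ ≠ 0 := fun h => hx₀ (by simp [h])
  set u₀ : X := ‖x₀‖⁻¹ • x₀ with hu₀def
  have hu₀ : ‖u₀‖ = 1 := by
    rw [hu₀def, norm_smul, norm_inv, norm_norm,
      inv_mul_cancel₀ (norm_ne_zero_iff.mpr hx₀0)]
  have hSne : {c : ℝ | ∃ x : X, ‖x‖ = 1 ∧ c = ‖T x‖}.Nonempty := ⟨‖T u₀‖, u₀, hu₀, rfl⟩
  have hbound : ∀ v : X, ‖v‖ = 1 → (1/3) * opNorm T ≤ ‖T v‖ ∧ ‖T v‖ ≤ 3 * infNorm T := by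
    intro v hv
    constructor
    · have hsup : sSup {c : ℝ | ∃ x : X, ‖x‖ = 1 ∧ c = ‖T x‖} ≤ 3 * ‖T v‖ :=
        csSup_le hSne (by rintro c ⟨x, hx, rfl⟩; exact key x v hx hv)
      have hop : opNorm T = sSup {c : ℝ | ∃ x : X, ‖x‖ = 1 ∧ c = ‖T x‖} := rfl
      rw [hop]; linarith
    · have hinf : (1/3) * ‖T v‖ ≤ sInf {c : ℝ | ∃ x : X, ‖x‖ = 1 ∧ c = ‖T x‖} :=
        le_csInf hSne (by rintro c ⟨y, hy, rfl⟩; linarith [key v y hv hy])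
      have hif : infNorm T = sInf {c : ℝ | ∃ x : X, ‖x‖ = 1 ∧ c = ‖T x‖} := rfl
      rw [hif]; linarith
  intro x
  rcases eq_or_ne x 0 with rfl | hx
  · simp
  · have hxpos : (0:ℝ) < ‖x‖ := norm_pos_iff.mpr hx
    set v : X := ‖x‖⁻¹ • x with hvdef
    have hv : ‖v‖ = 1 := by
      rw [hvdef, norm_smul, norm_inv, norm_norm, inv_mul_cancel₀ hxpos.ne']
    obtain ⟨hb1, hb2⟩ := hbound v hv
    have hTv : ‖T v‖ = ‖x‖⁻¹ * ‖T x‖ := by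
      rw [hvdef, map_smul, norm_smul, norm_inv, norm_norm]
    rw [hTv] at hb1 hb2
    have hinv : ‖x‖ * ‖x‖⁻¹ = 1 := mul_inv_cancel₀ hxpos.ne'
    have hTx : ‖x‖⁻¹ * ‖T x‖ * ‖x‖ = ‖T x‖ := by field_simp
    constructor
    · linarith [mul_le_mul_of_nonneg_right hb1 hxpos.le, hTx]
    · linarith [mul_le_mul_of_nonneg_right hb2 hxpos.le, hTx]
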